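/- Fix p > 1 and y > 0. If 1 < q₁ < q₂ and x₁, x₂ ∈ (0,1) satisfy ∫_0^{x₁} (1-t^{q₁})^{-1/p} dt = y and ∫_0^{x₂} (1-t^{q₂})^{-1/p} dt = y, then x₁ < x₂. In other words, the function q ↦ sin_{p,q}(y) is increasing on (1,∞). -/
import Mathlib


open MeasureTheory

lemma cont_aux (p q b : ℝ) (hq : 0 < q) (hb : b < 1) :
    ContinuousOn (fun t : ℝ => (1 - t ^ q) ^ (-(1 / p))) (Set.Icc 0 b) := by
  have h1 : ContinuousOn (fun t : ℝ => 1 - t ^ q) (Set.Icc 0 b) :=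
    continuousOn_const.sub
      ((continuousOn_id).rpow_const (fun t ht => Or.inr hq.le))
  refine h1.rpow_const (fun t ht => Or.inl ?_)
  have h2 : t ^ q < 1 := by
    calc t ^ q ≤ b ^ q := Real.rpow_le_rpow ht.1 ht.2 hq.le
    _ < 1 ^ q := Real.rpow_lt_rpow (le_trans ht.1 ht.2) hb hq
    _ = 1 := Real.one_rpow q
  intro h; rw [sub_eq_zero] at h; exact absurd h.symm h2.ne

theorem sin_pq_increasing_in_q (p y : ℝ) (hp : 1 < p) (hy : 0 < y)
    (q₁ q₂ x₁ x₂ : ℝ) (hq₁ : 1 < q₁) (hq : q₁ < q₂)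
    (hx₁ : x₁ ∈ Set.Ioo (0:ℝ) 1) (hx₂ : x₂ ∈ Set.Ioo (0:ℝ) 1)
    (h₁ : (∫ t in (0:ℝ)..x₁, (1 - t ^ q₁) ^ (-(1 / p))) = y)
    (h₂ : (∫ t in (0:ℝ)..x₂, (1 - t ^ q₂) ^ (-(1 / p))) = y) :
    x₁ < x₂ := by
  by_contra hle
  push_neg at hle
  obtain ⟨hx₁0, hx₁1⟩ := hx₁
  obtain ⟨hx₂0, hx₂1⟩ := hx₂
  have hq₂ : (1:ℝ) < q₂ := hq₁.trans hq
  have hpneg : -(1 / p) < 0 := by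
    rw [neg_lt, neg_zero]; positivity
  have key : (∫ t in (0:ℝ)..x₁, (1 - t ^ q₂) ^ (-(1 / p)))
      < ∫ t in (0:ℝ)..x₁, (1 - t ^ q₁) ^ (-(1 / p)) := by
    apply intervalIntegral.integral_lt_integral_of_continuousOn_of_le_of_exists_lt hx₁0
      (cont_aux p q₂ x₁ (by linarith) hx₁1) (cont_aux p q₁ x₁ (by linarith) hx₁1)
    · intro t ht
      obtain ⟨ht0, ht2⟩ := ht
      have ht1 : t < 1 := lt_of_le_of_lt ht2 hx₁1
      have h1 : t ^ q₂ < t ^ q₁ := Real.rpow_lt_rpow_of_exponent_gt ht0 ht1 hq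
      have h2 : t ^ q₁ < 1 := by
        calc t ^ q₁ < 1 ^ q₁ := Real.rpow_lt_rpow ht0.le ht1 (by linarith)
        _ = 1 := Real.one_rpow q₁
      exact Real.rpow_le_rpow_of_nonpos (by linarith) (by linarith) hpneg.le
    · refine ⟨x₁, ⟨hx₁0.le, le_refl _⟩, ?_⟩
      have h1 : x₁ ^ q₂ < x₁ ^ q₁ := Real.rpow_lt_rpow_of_exponent_gt hx₁0 hx₁1 hq
      have h2 : x₁ ^ q₁ < 1 := by
        calc x₁ ^ q₁ < 1 ^ q₁ := Real.rpow_lt_rpow hx₁0.le hx₁1 (by linarith)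
        _ = 1 := Real.one_rpow q₁
      exact Real.rpow_lt_rpow_of_neg (by linarith) (by linarith) hpneg
  -- monotonicity: ∫_0^{x₂} f₂ ≤ ∫_0^{x₁} f₂
  have mono : (∫ t in (0:ℝ)..x₂, (1 - t ^ q₂) ^ (-(1 / p)))
      ≤ ∫ t in (0:ℝ)..x₁, (1 - t ^ q₂) ^ (-(1 / p)) := by
    have hi₁ : IntervalIntegrable (fun t : ℝ => (1 - t ^ q₂) ^ (-(1 / p)))
        volume 0 x₁ :=
      (cont_aux p q₂ x₁ (by linarith) hx₁1).intervalIntegrable_of_Icc hx₁0.le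
    have hi₂ : IntervalIntegrable (fun t : ℝ => (1 - t ^ q₂) ^ (-(1 / p)))
        volume 0 x₂ :=
      hi₁.mono_set (by
        rw [Set.uIcc_of_le hx₂0.le, Set.uIcc_of_le hx₁0.le]
        exact Set.Icc_subset_Icc_right hle)
    have := intervalIntegral.integral_add_adjacent_intervals hi₂
      (hi₁.mono_set (by
        rw [Set.uIcc_of_le hle, Set.uIcc_of_le hx₁0.le]
        exact Set.Icc_subset_Icc_left hx₂0.le))
    rw [← this]
    have hnn : (0:ℝ) ≤ ∫ t in x₂..x₁, (1 - t ^ q₂) ^ (-(1 / p)) := by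
      apply intervalIntegral.integral_nonneg hle
      intro u hu
      exact Real.rpow_nonneg (by
        have : u ^ q₂ ≤ 1 := Real.rpow_le_one (le_trans hx₂0.le hu.1)
          (by linarith [hu.2]) (by linarith)
        linarith) _
    linarith
  rw [h₂] at mono
  rw [h₁] at key
  linarith
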